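/- Zero version of Bihari's inequality: let u : [0, T] → [0, ∞) be continuous, C ≥ 0, and ρ : [0, ∞) → [0, ∞) continuous, concave, nondecreasing with ρ(0) = 0, ρ(r) > 0 for r > 0, and ∫_{0⁺} dr/ρ(r) = +∞. If u(t) ≤ C ∫_t^T ρ(u(s)) ds for all t ∈ [0, T], then u ≡ 0 on [0, T]. -/

import Mathlib

open MeasureTheory Set intervalIntegral Topology Filter

/-- Zero version of Bihari's inequality: if `u(t) ≤ C ∫_t^T ρ(u(s)) ds` on `[0,T]` with
`ρ` continuous, concave, nondecreasing, `ρ(0) = 0`, `ρ > 0` on `(0,∞)`, and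
`∫_{0⁺} dr/ρ(r) = +∞`, then `u ≡ 0` on `[0,T]`. -/
theorem bihari_zero_version (T C : ℝ) (u ρ : ℝ → ℝ)
    (hT : 0 ≤ T) (hC : 0 ≤ C)
    (hu_cont : ContinuousOn u (Set.Icc 0 T))
    (hu_nonneg : ∀ t ∈ Set.Icc (0:ℝ) T, 0 ≤ u t)
    (hρ_cont : ContinuousOn ρ (Set.Ici 0))
    (hρ_conc : ConcaveOn ℝ (Set.Ici 0) ρ)
    (hρ_mono : MonotoneOn ρ (Set.Ici 0))
    (hρ0 : ρ 0 = 0)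
    (hρ_pos : ∀ r, 0 < r → 0 < ρ r)
    (hOsgood : ∀ a, 0 < a →
      ¬ IntervalIntegrable (fun r => 1 / ρ r) MeasureTheory.volume 0 a)
    (hmain : ∀ t ∈ Set.Icc (0:ℝ) T, u t ≤ C * ∫ s in t..T, ρ (u s)) :
    ∀ t ∈ Set.Icc (0:ℝ) T, u t = 0 := by
  by_contra hcon
  push_neg at hcon
  obtain ⟨t0, ht0, hut0⟩ := hcon
  -- f = ρ ∘ u
  set f : ℝ → ℝ := fun s => ρ (u s) with hf_def
  have hf_cont : ContinuousOn f (Set.Icc 0 T) :=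
    hρ_cont.comp hu_cont (fun t ht => hu_nonneg t ht)
  have hf_nonneg : ∀ s ∈ Set.Icc (0:ℝ) T, 0 ≤ f s := by
    intro s hs
    have := hρ_mono (le_refl (0:ℝ)) (hu_nonneg s hs) (hu_nonneg s hs)
    simpa [hρ0] using this
  have hf_int : ∀ a b, a ∈ Set.Icc (0:ℝ) T → b ∈ Set.Icc (0:ℝ) T →
      IntervalIntegrable f volume a b := by
    intro a b ha hb
    exact (hf_cont.mono (Set.uIcc_subset_Icc ha hb)).intervalIntegrable
  -- v
  set v : ℝ → ℝ := fun t => C * ∫ s in t..T, f s with hv_def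
  have hTmem : T ∈ Set.Icc (0:ℝ) T := Set.right_mem_Icc.2 hT
  have h0mem : (0:ℝ) ∈ Set.Icc (0:ℝ) T := Set.left_mem_Icc.2 hT
  have hvT : v T = 0 := by simp [hv_def]
  have hv_nonneg : ∀ t ∈ Set.Icc (0:ℝ) T, 0 ≤ v t := by
    intro t ht
    refine mul_nonneg hC (intervalIntegral.integral_nonneg ht.2 ?_)
    intro s hs
    exact hf_nonneg s ⟨le_trans ht.1 hs.1, hs.2⟩
  have hu_le_v : ∀ t ∈ Set.Icc (0:ℝ) T, u t ≤ v t := hmain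
  have hv_anti : ∀ a ∈ Set.Icc (0:ℝ) T, ∀ b ∈ Set.Icc (0:ℝ) T, a ≤ b → v b ≤ v a := by
    intro a ha b hb hab
    have hsplit : (∫ s in a..b, f s) + (∫ s in b..T, f s) = ∫ s in a..T, f s :=
      intervalIntegral.integral_add_adjacent_intervals (hf_int a b ha hb) (hf_int b T hb hTmem)
    have h1 : 0 ≤ ∫ s in a..b, f s := by
      refine intervalIntegral.integral_nonneg hab ?_
      intro s hs
      exact hf_nonneg s ⟨le_trans ha.1 hs.1, le_trans hs.2 hb.2⟩
    have : (∫ s in b..T, f s) ≤ ∫ s in a..T, f s := by linarith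
    exact mul_le_mul_of_nonneg_left this hC
  -- continuity of v on [0,T]
  have hv_cont : ContinuousOn v (Set.Icc 0 T) := by
    have h_int : IntegrableOn f (Set.uIcc 0 T) volume := by
      rw [Set.uIcc_of_le hT]
      exact hf_cont.integrableOn_Icc
    have := (intervalIntegral.continuousOn_primitive_interval_left h_int).const_smul C
    rw [Set.uIcc_of_le hT] at this
    exact this.congr (fun x _ => by simp [hv_def])
  -- derivative of v at interior points
  have hv_deriv : ∀ t ∈ Set.Ioo (0:ℝ) T, HasDerivAt v (-(C * f t)) t := by
    intro t ht
    have hmemt : t ∈ Set.Icc (0:ℝ) T := Set.Ioo_subset_Icc_self ht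
    have hcontat : ContinuousAt f t :=
      hf_cont.continuousAt (Icc_mem_nhds ht.1 ht.2)
    have hmeas : StronglyMeasurableAtFilter f (𝓝 t) volume := by
      refine ContinuousAt.stronglyMeasurableAtFilter isOpen_Ioo
        (fun x hx => hf_cont.continuousAt (Icc_mem_nhds hx.1 hx.2)) t ht
    have hD : HasDerivAt (fun x => ∫ s in T..x, f s) (f t) t :=
      intervalIntegral.integral_hasDerivAt_right (hf_int T t hTmem hmemt) hmeas hcontat
    have hD2 : HasDerivAt (fun x => C * -∫ s in T..x, f s) (C * -(f t)) t := by
      exact (hD.neg.const_mul C)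
    have heq : (fun x => C * -∫ s in T..x, f s) = v := by
      funext x
      simp [hv_def, intervalIntegral.integral_symm T x]
    rw [heq] at hD2
    convert hD2 using 1
    ring
  -- the bad point
  have hut0' : 0 < u t0 := lt_of_le_of_ne (hu_nonneg t0 ht0) (Ne.symm hut0)
  set c := v t0 with hc_def
  have hc_pos : 0 < c := lt_of_lt_of_le hut0' (hu_le_v t0 ht0)
  -- first zero of v after t0
  set S := {t | t ∈ Set.Icc t0 T ∧ v t = 0} with hS_def
  have hTS : T ∈ S := ⟨⟨ht0.2, le_refl T⟩, hvT⟩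
  have hS_ne : S.Nonempty := ⟨T, hTS⟩
  have hS_bdd : BddBelow S := ⟨t0, fun x hx => hx.1.1⟩
  set t1 := sInf S with ht1_def
  have ht1_mem_Icc : t1 ∈ Set.Icc t0 T :=
    ⟨le_csInf hS_ne (fun x hx => hx.1.1), csInf_le hS_bdd hTS⟩
  have ht1_mem : t1 ∈ Set.Icc (0:ℝ) T := ⟨le_trans ht0.1 ht1_mem_Icc.1, ht1_mem_Icc.2⟩
  have hS_closed : IsClosed S := by
    have : S = Set.Icc t0 T ∩ (Set.Icc 0 T ∩ v ⁻¹' {0}) := by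
      ext x
      constructor
      · intro hx
        exact ⟨hx.1, ⟨le_trans ht0.1 hx.1.1, hx.1.2⟩, hx.2⟩
      · intro hx
        exact ⟨hx.1, hx.2.2⟩
    rw [this]
    exact isClosed_Icc.inter
      (hv_cont.preimage_isClosed_of_isClosed isClosed_Icc isClosed_singleton)
  have ht1S : t1 ∈ S := hS_closed.csInf_mem hS_ne hS_bdd
  have hvt1 : v t1 = 0 := ht1S.2
  have hv_pos : ∀ t ∈ Set.Ico t0 t1, 0 < v t := by
    intro t ht
    have htIcc : t ∈ Set.Icc (0:ℝ) T := ⟨le_trans ht0.1 ht.1, le_trans (le_of_lt ht.2) ht1_mem.2⟩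
    rcases lt_or_eq_of_le (hv_nonneg t htIcc) with h | h
    · exact h
    · exfalso
      have hts : t ∈ S := ⟨⟨ht.1, htIcc.2⟩, h.symm⟩
      exact absurd (csInf_le hS_bdd hts) (not_le.2 ht.2)
  have ht01 : t0 < t1 := by
    rcases lt_or_eq_of_le ht1_mem_Icc.1 with h | h
    · exact h
    · exfalso
      rw [← h] at hvt1
      rw [← hc_def] at hvt1
      exact absurd hvt1 (ne_of_gt hc_pos)
  -- the function 1/ρ
  have hinv_cont : ∀ y : ℝ, 0 < y → ContinuousAt (fun r => 1 / ρ r) y := by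
    intro y hy
    exact ContinuousAt.div continuousAt_const
      (hρ_cont.continuousAt (Filter.mem_of_superset (Ioi_mem_nhds hy) Set.Ioi_subset_Ici_self))
      (ne_of_gt (hρ_pos y hy))
  have hinv_int : ∀ a b : ℝ, 0 < a → 0 < b →
      IntervalIntegrable (fun r => 1 / ρ r) volume a b := by
    intro a b ha hb
    refine ContinuousOn.intervalIntegrable (fun x hx => ?_)
    exact (hinv_cont x (lt_of_lt_of_le (lt_min ha hb) hx.1)).continuousWithinAt
  set Φ : ℝ → ℝ := fun x => ∫ r in c..x, 1 / ρ r with hΦ_def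
  have hΦ_deriv : ∀ y : ℝ, 0 < y → HasDerivAt Φ (1 / ρ y) y := by
    intro y hy
    exact intervalIntegral.integral_hasDerivAt_right (hinv_int c y hc_pos hy)
      (ContinuousAt.stronglyMeasurableAtFilter isOpen_Ioi
        (fun x hx => hinv_cont x hx) y hy)
      (hinv_cont y hy)
  -- the key bound
  have key : ∀ x ∈ Set.Ioc (0:ℝ) c, (∫ r in x..c, 1 / ρ r) ≤ C * T := by
    intro x hx
    have hIccsub : Set.Icc t0 t1 ⊆ Set.Icc (0:ℝ) T := Set.Icc_subset_Icc ht0.1 ht1_mem.2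
    have hIVT : Set.Icc (v t1) (v t0) ⊆ v '' Set.Icc t0 t1 :=
      intermediate_value_Icc' (le_of_lt ht01) (hv_cont.mono hIccsub)
    obtain ⟨t', ht'mem, ht'x⟩ : x ∈ v '' Set.Icc t0 t1 := by
      apply hIVT
      rw [hvt1, ← hc_def]
      exact ⟨le_of_lt hx.1, hx.2⟩
    have ht'lt : t' < t1 := by
      rcases lt_or_eq_of_le ht'mem.2 with h | h
      · exact h
      · exfalso
        rw [h, hvt1] at ht'x
        exact absurd ht'x.symm (ne_of_gt hx.1)
    have ht'Icc : t' ∈ Set.Icc (0:ℝ) T := hIccsub ht'mem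
    -- positivity of v on [t0, t']
    have hvpos' : ∀ t ∈ Set.Icc t0 t', 0 < v t :=
      fun t ht => hv_pos t ⟨ht.1, lt_of_le_of_lt ht.2 ht'lt⟩
    have hsubIcc : Set.Icc t0 t' ⊆ Set.Icc (0:ℝ) T :=
      Set.Icc_subset_Icc ht0.1 ht'Icc.2
    set g : ℝ → ℝ := fun t => Φ (v t) + C * t with hg_def
    have hg_cont : ContinuousOn g (Set.Icc t0 t') := by
      refine ContinuousOn.add ?_ (continuousOn_const.mul continuousOn_id)
      intro t ht
      exact ((hΦ_deriv (v t) (hvpos' t ht)).continuousAt).comp_continuousWithinAt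
        ((hv_cont.mono hsubIcc) t ht)
    have hgderiv : ∀ t ∈ Set.Ioo t0 t',
        HasDerivAt g (1 / ρ (v t) * -(C * f t) + C) t := by
      intro t ht
      have htIcc : t ∈ Set.Icc t0 t' := Set.Ioo_subset_Icc_self ht
      have htIoo : t ∈ Set.Ioo (0:ℝ) T :=
        ⟨lt_of_le_of_lt ht0.1 ht.1, lt_of_lt_of_le ht.2 ht'Icc.2⟩
      have h1 : HasDerivAt (fun s => Φ (v s)) (1 / ρ (v t) * -(C * f t)) t :=
        (hΦ_deriv (v t) (hvpos' t htIcc)).comp t (hv_deriv t htIoo)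
      have h2 : HasDerivAt (fun s => C * s) C t := by
        simpa using (hasDerivAt_id t).const_mul C
      exact h1.add h2
    have hmono : MonotoneOn g (Set.Icc t0 t') := by
      apply monotoneOn_of_deriv_nonneg (convex_Icc t0 t') hg_cont
      · intro t ht
        rw [interior_Icc] at ht
        exact ((hgderiv t ht).differentiableAt).differentiableWithinAt
      · intro t ht
        rw [interior_Icc] at ht
        rw [(hgderiv t ht).deriv]
        have htIcc0 : t ∈ Set.Icc (0:ℝ) T := hsubIcc (Set.Ioo_subset_Icc_self ht)
        have hvtpos : 0 < ρ (v t) := hρ_pos _ (hvpos' t (Set.Ioo_subset_Icc_self ht))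
        have hρle : f t ≤ ρ (v t) :=
          hρ_mono (hu_nonneg t htIcc0)
            (le_trans (hu_nonneg t htIcc0) (hu_le_v t htIcc0)) (hu_le_v t htIcc0)
        have hfrac : f t / ρ (v t) ≤ 1 := (div_le_one hvtpos).2 hρle
        have hmm : C * (f t / ρ (v t)) ≤ C * 1 := mul_le_mul_of_nonneg_left hfrac hC
        have heq : 1 / ρ (v t) * -(C * f t) + C = C - C * (f t / ρ (v t)) := by
          field_simp
          ring
        rw [heq]
        linarith
    have hineq : Φ (v t0) + C * t0 ≤ Φ (v t') + C * t' :=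
      hmono (Set.left_mem_Icc.2 ht'mem.1) (Set.right_mem_Icc.2 ht'mem.1) ht'mem.1
    have hΦc : Φ (v t0) = 0 := by
      rw [← hc_def]
      simp [hΦ_def]
    have hsymm : (∫ r in x..c, 1 / ρ r) = -Φ x := by
      rw [hΦ_def]
      exact intervalIntegral.integral_symm c x
    have hCT : C * (t' - t0) ≤ C * T :=
      mul_le_mul_of_nonneg_left (by linarith [ht'Icc.2, ht0.1]) hC
    rw [ht'x] at hineq
    rw [hsymm]
    linarith
  -- contradiction with the Osgood condition
  apply hOsgood c hc_pos
  rw [intervalIntegrable_iff_integrableOn_Ioc_of_le (le_of_lt hc_pos)]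
  have hseq_pos : ∀ n : ℕ, 0 < c / (n + 1) := by
    intro n
    positivity
  have hseq_le : ∀ n : ℕ, c / (n + 1) ≤ c := by
    intro n
    apply div_le_self (le_of_lt hc_pos)
    have : (0:ℝ) ≤ (n:ℝ) := Nat.cast_nonneg n
    linarith
  refine MeasureTheory.integrableOn_Ioc_of_intervalIntegral_norm_bounded_left
    (I := C * T) (a := fun n : ℕ => c / (n + 1)) (b := c) (l := Filter.atTop)
    (fun n => ?_) ?_ ?_
  · exact ((intervalIntegrable_iff_integrableOn_Ioc_of_le (hseq_le n)).1
      (hinv_int _ _ (hseq_pos n) hc_pos))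
  · have h1 : Filter.Tendsto (fun n : ℕ => 1 / ((n:ℝ) + 1)) Filter.atTop (𝓝 0) :=
      tendsto_one_div_add_atTop_nhds_zero_nat
    have := h1.const_mul c
    simpa [div_eq_mul_inv] using this
  · refine Filter.Eventually.of_forall (fun n => ?_)
    have heqint : (∫ r in Set.Ioc (c / (n+1)) c, ‖1 / ρ r‖) =
        ∫ r in Set.Ioc (c / (n+1)) c, 1 / ρ r := by
      refine MeasureTheory.setIntegral_congr_fun measurableSet_Ioc (fun r hr => ?_)
      have hrpos : 0 < ρ r := hρ_pos r (lt_trans (hseq_pos n) hr.1)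
      rw [Real.norm_eq_abs, abs_of_nonneg (le_of_lt (div_pos one_pos hrpos))]
    rw [heqint, ← intervalIntegral.integral_of_le (hseq_le n)]
    exact key _ ⟨hseq_pos n, hseq_le n⟩
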